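/- Let (X, d, ≤, ≪, τ) be a Lorentzian pre-length space satisfying the local causal enlargement property and E ⊆ X with V^s_d(E) < ∞. Assume V^s_d is outer regular, V^s_d(J(p,q)) = 0 whenever p, q are null related, every causal diamond is closed, and E is contained in a compact set A with d(E, Aᶜ) > 0. Then for every ε > 0 there is a V^s_d-negligible set N ⊆ E such that for every x ∈ E \ N there exists δ_x > 0 with: for every causal diamond J with x ∈ J ⊆ B_d(x, δ_x), one has V^s_d(E ∩ J) ≤ (1 + ε) ρ_s(J). -/

import Mathlib

open scoped ENNReal NNReal
open MeasureTheory Metric Set Filter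

/-- A Lorentzian pre-length space structure on a metric space `X`. -/
structure PLS (X : Type*) [MetricSpace X] where
  causal : X → X → Prop
  chron : X → X → Prop
  tau : X → X → ℝ≥0∞
  causal_refl : ∀ x, causal x x
  causal_trans : ∀ {x y z}, causal x y → causal y z → causal x z
  chron_trans : ∀ {x y z}, chron x y → chron y z → chron x z
  chron_imp_causal : ∀ {x y}, chron x y → causal x y
  tau_lsc : LowerSemicontinuous fun p : X × X => tau p.1 p.2
  tau_revTriangle : ∀ {x y z}, causal x y → causal y z → tau x y + tau y z ≤ tau x z
  tau_eq_zero : ∀ {x y}, ¬ causal x y → tau x y = 0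
  tau_pos_iff : ∀ {x y}, 0 < tau x y ↔ chron x y

namespace PLS

variable {X : Type*} [MetricSpace X]

/-- Causal diamond `J(p,q)`. -/
def J (L : PLS X) (p q : X) : Set X := {x | L.causal p x ∧ L.causal x q}

/-- Chronological diamond `I(p,q)`. -/
def I (L : PLS X) (p q : X) : Set X := {x | L.chron p x ∧ L.chron x q}

/-- `p` and `q` are null related. -/
def NullRelated (L : PLS X) (p q : X) : Prop := L.causal p q ∧ ¬ L.chron p q

end PLS

/-- The normalizing constant `ω_s`. -/
noncomputable def omegaL (s : ℝ) : ℝ≥0∞ :=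
  ENNReal.ofReal (Real.pi ^ ((s - 1) / 2) / (s * Real.Gamma ((s + 1) / 2) * (2 : ℝ) ^ (s - 1)))

namespace PLS

variable {X : Type*} [MetricSpace X]

/-- `ρ_s(J(p,q)) = ω_s τ(p,q)^s`. -/
noncomputable def rho (L : PLS X) (s : ℝ) (p q : X) : ℝ≥0∞ := omegaL s * L.tau p q ^ s

/-- Members of the family `𝒥` encoded by `Option (X × X)`: `none` is the empty set,
`some (p,q)` the diamond `J(p,q)` with `p < q`. -/
def Jopt (L : PLS X) : Option (X × X) → Set X
  | none => ∅
  | some pq => L.J pq.1 pq.2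

/-- Validity of a member of `𝒥`: nontrivial causally related vertices. -/
def memJJ (L : PLS X) : Option (X × X) → Prop
  | none => True
  | some pq => L.causal pq.1 pq.2 ∧ pq.1 ≠ pq.2

/-- `ρ_s` extended to members of `𝒥` (or of the chronological family). -/
noncomputable def rhoOpt (L : PLS X) (s : ℝ) : Option (X × X) → ℝ≥0∞
  | none => 0
  | some pq => L.rho s pq.1 pq.2

/-- `δ`-approximation `𝒱^s_{d,δ}` of the Lorentzian Hausdorff measure. -/
noncomputable def Vd (L : PLS X) (s δ : ℝ) (A : Set X) : ℝ≥0∞ :=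
  ⨅ (c : ℕ → Option (X × X)) (_ : (∀ i, L.memJJ (c i)) ∧
      (∀ i, Metric.diam (L.Jopt (c i)) < δ) ∧ A ⊆ ⋃ i, L.Jopt (c i)),
    ∑' i, L.rhoOpt s (c i)

/-- The `s`-dimensional Lorentzian Hausdorff measure (as a set function);
since `Vd` is non-increasing in `δ`, the limit as `δ → 0` equals the supremum. -/
noncomputable def V (L : PLS X) (s : ℝ) (A : Set X) : ℝ≥0∞ :=
  ⨆ (δ : ℝ) (_ : 0 < δ), L.Vd s δ A

/-- Members of the chronological family, encoded by `Option (X × X)`. -/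
def Iopt (L : PLS X) : Option (X × X) → Set X
  | none => ∅
  | some pq => L.I pq.1 pq.2

/-- Validity of a member of the chronological family. -/
def memII (L : PLS X) : Option (X × X) → Prop
  | none => True
  | some pq => L.chron pq.1 pq.2

/-- `δ`-approximation `ℳ^s_δ` of the strong Lorentzian Hausdorff measure,
via coverings by chronological diamonds. -/
noncomputable def Md (L : PLS X) (s δ : ℝ) (A : Set X) : ℝ≥0∞ :=
  ⨅ (c : ℕ → Option (X × X)) (_ : (∀ i, L.memII (c i)) ∧
      (∀ i, Metric.diam (L.Iopt (c i)) ≤ δ) ∧ A ⊆ ⋃ i, L.Iopt (c i)),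
    ∑' i, L.rhoOpt s (c i)

/-- Causal weighted `δ`-integral. -/
noncomputable def cwIntD (L : PLS X) (s δ : ℝ) (f : X → ℝ≥0∞) : ℝ≥0∞ :=
  ⨅ (a : ℕ → ℝ≥0∞) (c : ℕ → Option (X × X))
    (_ : (∀ i, 0 < a i) ∧ (∀ i, L.memJJ (c i)) ∧
      (∀ i, Metric.diam (L.Jopt (c i)) ≤ δ) ∧
      ∀ x, f x ≤ ∑' i, a i * (L.Jopt (c i)).indicator 1 x),
    ∑' i, a i * L.rhoOpt s (c i)

/-- Causal weighted integral `∫• f dV^s_d`. -/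
noncomputable def cwInt (L : PLS X) (s : ℝ) (f : X → ℝ≥0∞) : ℝ≥0∞ :=
  ⨆ (δ : ℝ) (_ : 0 < δ), L.cwIntD s δ f

end PLS

section Maps

variable {X Y : Type*} [MetricSpace X] [MetricSpace Y]

/-- `U` is causality preserving. -/
def CausalityPreserving (LX : PLS X) (LY : PLS Y) (U : X → Y) : Prop :=
  ∀ p q, LX.causal p q → LY.causal (U p) (U q)

/-- `U` is timelike Lipschitz. -/
def TimelikeLipschitz (LX : PLS X) (LY : PLS Y) (U : X → Y) : Prop :=
  ∃ lam : ℝ, 0 < lam ∧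
    ∀ p q, LX.causal p q → LY.tau (U p) (U q) ≤ ENNReal.ofReal lam * LX.tau p q

/-- The timelike Lipschitz constant `TLip U`. -/
noncomputable def TLip (LX : PLS X) (LY : PLS Y) (U : X → Y) : ℝ≥0∞ :=
  ⨅ (lam : ℝ≥0∞)
    (_ : 0 < lam ∧ ∀ p q, LX.causal p q → LY.tau (U p) (U q) ≤ lam * LX.tau p q), lam

/-- `U` is uniformly `d`-controlling. -/
def UniformlyDControlling (LX : PLS X) (LY : PLS Y) (U : X → Y) : Prop :=
  CausalityPreserving LX LY U ∧
    ∃ η : ℝ → ℝ, (∀ s, 0 < s → 0 < η s) ∧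
      Tendsto η (nhdsWithin 0 (Set.Ioi 0)) (nhds 0) ∧
      ∀ δ, 0 < δ → ∀ p q : X,
        Metric.diam (LX.J p q) < δ → Metric.diam (LY.J (U p) (U q)) < η δ

/-- The summand `ρ_s(J(U a, U b)) ρ_t(J(a,b))` for `Φ`. -/
noncomputable def phiTerm (LX : PLS X) (LY : PLS Y) (U : X → Y) (s t : ℝ) :
    Option (X × X) → ℝ≥0∞
  | none => 0
  | some pq => LY.rho s (U pq.1) (U pq.2) * LX.rho t pq.1 pq.2

/-- `Φ^{s,t}_δ(U, E)`. -/
noncomputable def PhiD (LX : PLS X) (LY : PLS Y) (U : X → Y) (s t δ : ℝ) (E : Set X) : ℝ≥0∞ :=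
  ⨅ (c : ℕ → Option (X × X)) (_ : (∀ i, LX.memJJ (c i)) ∧
      (∀ i, Metric.diam (LX.Jopt (c i)) < δ) ∧ E ⊆ ⋃ i, LX.Jopt (c i)),
    ∑' i, phiTerm LX LY U s t (c i)

/-- `Φ^{s,t}(U, E) = lim_{δ→0} Φ^{s,t}_δ(U, E)`. -/
noncomputable def Phi (LX : PLS X) (LY : PLS Y) (U : X → Y) (s t : ℝ) (E : Set X) : ℝ≥0∞ :=
  ⨆ (δ : ℝ) (_ : 0 < δ), PhiD LX LY U s t δ E

end Maps

section Enlargement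

variable {X : Type*} [MetricSpace X]

/-- `J(p',q')` is a causal enlargement of `J(p,q)` with constants `C₁, C₂`. -/
def IsEnlargement (L : PLS X) (C1 C2 : ℝ) (p q p' q' : X) : Prop :=
  (∀ a b : X, L.causal a b → a ≠ b → (L.J a b ∩ L.J p q).Nonempty →
      Metric.diam (L.J a b) ≤ 2 * Metric.diam (L.J p q) → L.J a b ⊆ L.J p' q') ∧
  Metric.diam (L.J p' q') ≤ C1 * Metric.diam (L.J p q) ∧
  L.tau p' q' ≤ ENNReal.ofReal C2 * L.tau p q

/-- `Ux` is a causal enlargement neighborhood for constants `C₁, C₂`. -/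
def CausalEnlargementNbhd (L : PLS X) (Ux : Set X) (C1 C2 : ℝ) : Prop :=
  ∀ p q : X, L.chron p q → L.J p q ⊆ Ux → ∃ p' q', IsEnlargement L C1 C2 p q p' q'

/-- `X` satisfies the local causal enlargement property. -/
def LocalCausalEnlargement (L : PLS X) : Prop :=
  ∀ x : X, ∃ Ux ∈ nhds x, ∃ C1 C2 : ℝ, 1 ≤ C1 ∧ 1 ≤ C2 ∧ CausalEnlargementNbhd L Ux C1 C2

/-- `Ux` is a causal estimation neighborhood. -/
def CausalEstimationNbhd (L : PLS X) (Ux : Set X) : Prop :=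
  (∀ p q : X, (L.I p q).Nonempty → L.I p q ⊆ Ux →
      Metric.diam (L.I p q) = Metric.diam (L.J p q)) ∧
  (∀ p q : X, L.J p q ⊆ Ux → ∀ ε1 ε2 : ℝ, 1 < ε1 → 0 < ε2 →
      ∃ p' q', L.chron p' q' ∧ L.J p q ⊆ L.I p' q' ∧
        Metric.diam (L.I p' q') ≤ ε1 * Metric.diam (L.J p q) ∧
        L.tau p' q' ≤ L.tau p q + ENNReal.ofReal ε2)

/-- `X` satisfies the causal estimation property. -/
def CausalEstimation (L : PLS X) : Prop := ∀ x : X, ∃ Ux ∈ nhds x, CausalEstimationNbhd L Ux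

end Enlargement

/-- The upper integral `∫* f dμ`. -/
noncomputable def upperInt {α : Type*} [MeasurableSpace α] (μ : Measure α) (f : α → ℝ≥0∞) : ℝ≥0∞ :=
  ⨅ (φ : α → ℝ≥0∞) (_ : Measurable φ ∧ ∀ᵐ x ∂μ, f x ≤ φ x), ∫⁻ x, φ x ∂μ


section AuxLemmas

open scoped ENNReal
open Set Metric

private lemma aux_tsum_le_sum_add_tsum_compl {ι : Type*} (f : ι → ℝ≥0∞) (F : Finset ι) :
    ∑' i, f i ≤ ∑ i ∈ F, f i + ∑' i : {x // x ∉ F}, f i := by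
  classical
  have hle : ∀ i, f i ≤ (if i ∈ F then f i else 0) + (if i ∈ F then 0 else f i) := by
    intro i; split <;> simp
  calc ∑' i, f i ≤ ∑' i, ((if i ∈ F then f i else 0) + (if i ∈ F then 0 else f i)) :=
        ENNReal.tsum_le_tsum hle
    _ = (∑' i, (if i ∈ F then f i else 0)) + ∑' i, (if i ∈ F then 0 else f i) :=
        ENNReal.tsum_add
    _ ≤ ∑ i ∈ F, f i + ∑' i : {x // x ∉ F}, f i := by
        gcongr
        · rw [tsum_eq_sum (s := F) (fun b hb => if_neg hb)]
          exact le_of_eq (Finset.sum_congr rfl fun i hi => if_pos hi)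
        · have hsupp : Function.support (fun i => if i ∈ F then (0 : ℝ≥0∞) else f i)
              ⊆ {x : ι | x ∉ F} := by
            intro i hi
            simp only [Function.mem_support] at hi
            intro hiF
            exact hi (by simp [hiF])
          rw [← tsum_subtype_eq_of_support_subset hsupp]
          refine le_of_eq (tsum_congr fun i => ?_)
          exact if_neg i.2

private lemma aux_tau_self {X : Type*} [MetricSpace X] (L : PLS X) (x : X) :
    L.tau x x = 0 ∨ L.tau x x = ⊤ := by
  have h := L.tau_revTriangle (L.causal_refl x) (L.causal_refl x)
  rcases eq_or_ne (L.tau x x) ⊤ with h' | h'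
  · exact Or.inr h'
  · left
    by_contra h0
    exact absurd h (not_le.mpr (ENNReal.lt_add_right h' h0))

private lemma aux_Vd_le {X : Type*} [MetricSpace X] (L : PLS X) (s δ : ℝ) (hδ : 0 < δ)
    (N : Set X) {ι : Type*} [Countable ι] (G : ι → X × X)
    (hmem : ∀ i, L.causal (G i).1 (G i).2 ∧ (G i).1 ≠ (G i).2)
    (hdiam : ∀ i, Metric.diam (L.J (G i).1 (G i).2) < δ)
    (hcov : N ⊆ ⋃ i, L.J (G i).1 (G i).2) :
    L.Vd s δ N ≤ ∑' i, L.rho s (G i).1 (G i).2 := by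
  classical
  obtain ⟨g, hg⟩ := Countable.exists_injective_nat ι
  set c : ℕ → Option (X × X) := fun n => if h : ∃ i, g i = n then some (G h.choose) else none
    with hc
  have hcg : ∀ i, c (g i) = some (G i) := by
    intro i
    have hex : ∃ j, g j = g i := ⟨i, rfl⟩
    simp only [hc]
    rw [dif_pos hex]
    congr 2
    exact hg hex.choose_spec
  have hnone : ∀ n, n ∉ Set.range g → c n = none := by
    intro n hn
    simp only [hc]
    rw [dif_neg]
    rintro ⟨i, hi⟩
    exact hn ⟨i, hi⟩
  have hsum : ∑' n, L.rhoOpt s (c n) = ∑' i, L.rho s (G i).1 (G i).2 := by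
    rw [← Function.Injective.tsum_eq hg (f := fun n => L.rhoOpt s (c n)) ?_]
    · exact tsum_congr fun i => by rw [hcg i]; rfl
    · intro n hn
      by_contra hr
      apply hn
      simp only [hnone n hr]
      rfl
  have hprop : (∀ i, L.memJJ (c i)) ∧ (∀ i, Metric.diam (L.Jopt (c i)) < δ) ∧
      N ⊆ ⋃ i, L.Jopt (c i) := by
    refine ⟨fun n => ?_, fun n => ?_, fun x hx => ?_⟩
    · by_cases h : ∃ i, g i = n
      · simp only [hc, dif_pos h]
        exact ⟨(hmem _).1, (hmem _).2⟩
      · simp only [hc, dif_neg h]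
        trivial
    · by_cases h : ∃ i, g i = n
      · simp only [hc, dif_pos h]
        exact hdiam _
      · simp only [hc, dif_neg h]
        simpa [PLS.Jopt] using hδ
    · obtain ⟨_, ⟨i, rfl⟩, hxi⟩ := hcov hx
      exact Set.mem_iUnion.2 ⟨g i, by rw [hcg i]; exact hxi⟩
  calc L.Vd s δ N ≤ ∑' n, L.rhoOpt s (c n) := by
        rw [PLS.Vd]
        exact iInf₂_le c hprop
    _ = _ := hsum

end AuxLemmas

theorem stmt10 {X : Type*} [MetricSpace X] [MeasurableSpace X] [BorelSpace X]
    (L : PLS X) (s : ℝ) (hs : 0 ≤ s) (hL : LocalCausalEnlargement L)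
    (μ : Measure X) (hμ : ∀ A : Set X, μ A = L.V s A) [μ.OuterRegular]
    (hnull : ∀ p q : X, L.NullRelated p q → L.V s (L.J p q) = 0)
    (hclosed : ∀ p q : X, IsClosed (L.J p q))
    (E : Set X) (hE : L.V s E ≠ ⊤)
    (A : Set X) (hA : IsCompact A) (hEA : E ⊆ A)
    (r : ℝ) (hr : 0 < r) (hthick : ∀ x ∈ E, Metric.ball x r ⊆ A)
    (ε : ℝ) (hε : 0 < ε) :
    ∃ N ⊆ E, μ N = 0 ∧ ∀ x ∈ E \ N, ∃ δx > (0 : ℝ), ∀ p q : X,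
      L.causal p q → p ≠ q → x ∈ L.J p q → L.J p q ⊆ Metric.ball x δx →
      μ (E ∩ L.J p q) ≤ (1 + ENNReal.ofReal ε) * L.rho s p q := by
  classical
  set ε' : ℝ≥0∞ := 1 + ENNReal.ofReal ε with hε'def
  set N : Set X := {x ∈ E | ∀ δ > (0:ℝ), ∃ p q : X, L.causal p q ∧ p ≠ q ∧ x ∈ L.J p q ∧
      L.J p q ⊆ Metric.ball x δ ∧ ε' * L.rho s p q < μ (E ∩ L.J p q)} with hNdef
  have hNE : N ⊆ E := fun x hx => hx.1
  have hμE : μ E ≠ ⊤ := by rw [hμ]; exact hE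
  have hμN_ne : μ N ≠ ⊤ := fun h => hμE (top_le_iff.mp (h ▸ measure_mono hNE))
  have hε'one : (1:ℝ≥0∞) < ε' := by
    rw [hε'def]
    exact ENNReal.lt_add_right ENNReal.one_ne_top (by simpa using hε)
  have hε'ne0 : ε' ≠ 0 := by positivity
  have hε'netop : ε' ≠ ⊤ := by
    rw [hε'def]
    exact ENNReal.add_ne_top.2 ⟨ENNReal.one_ne_top, ENNReal.ofReal_ne_top⟩
  have key : μ N = 0 := by
    rcases eq_or_lt_of_le hs with hs0 | hs0
    · -- case s = 0 : the measure of E vanishes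
      have homega : omegaL s = 0 := by
        rw [← hs0]
        simp [omegaL]
      have hVd0 : ∀ δ : ℝ, 0 < δ → L.Vd s δ E = 0 := by
        intro δ hδ
        have hVdne : L.Vd s δ E ≠ ⊤ := by
          intro h
          apply hE
          rw [PLS.V, eq_top_iff, ← h]
          exact le_iSup₂ (f := fun δ (_ : 0 < δ) => L.Vd s δ E) δ hδ
        have hex : ∃ c : ℕ → Option (X × X), (∀ i, L.memJJ (c i)) ∧
            (∀ i, Metric.diam (L.Jopt (c i)) < δ) ∧ E ⊆ ⋃ i, L.Jopt (c i) := by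
          by_contra hno
          push_neg at hno
          apply hVdne
          rw [PLS.Vd]
          rw [iInf_eq_top]
          intro c
          rw [iInf_eq_top]
          intro h
          exact absurd h (by
            rcases h with ⟨h1, h2, h3⟩
            exact absurd h3 (hno c h1 h2))
        obtain ⟨c, hc⟩ := hex
        refine le_antisymm ?_ (zero_le)
        calc L.Vd s δ E ≤ ∑' i, L.rhoOpt s (c i) := by rw [PLS.Vd]; exact iInf₂_le c hc
          _ = 0 := by
            refine ENNReal.tsum_eq_zero.mpr fun i => ?_
            cases hci : c i with
            | none => rfl
            | some pq =>
              show L.rho s pq.1 pq.2 = 0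
              rw [PLS.rho, homega, zero_mul]
      have hVE : L.V s E = 0 := by
        rw [PLS.V]
        exact le_antisymm (iSup₂_le fun δ hδ => (hVd0 δ hδ).le) (zero_le)
      have hμE0 : μ E = 0 := by rw [hμ]; exact hVE
      exact le_antisymm (hμE0 ▸ measure_mono hNE) (zero_le)
    · -- case 0 < s
      have homega_pos : 0 < omegaL s := by
        rw [omegaL, ENNReal.ofReal_pos]
        apply div_pos (Real.rpow_pos_of_pos Real.pi_pos _)
        exact mul_pos (mul_pos hs0 (Real.Gamma_pos_of_pos (by linarith)))
          (Real.rpow_pos_of_pos two_pos _)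
      -- choose local enlargement data
      choose U hU C1f C2f hC1f hC2f hCE using hL
      obtain ⟨T, hT⟩ := hA.elim_finite_subcover (fun x : X => interior (U x))
        (fun x => isOpen_interior)
        (fun a _ => Set.mem_iUnion.2 ⟨a, mem_interior_iff_mem_nhds.2 (hU a)⟩)
      obtain ⟨δleb, hδleb, hleb⟩ := lebesgue_number_lemma_of_metric (s := A)
        (c := fun i : T => interior (U i)) hA (fun _ => isOpen_interior)
        (by
          intro a ha
          obtain ⟨i, hiT, hi⟩ := Set.mem_iUnion₂.1 (hT ha)
          exact Set.mem_iUnion.2 ⟨⟨i, hiT⟩, hi⟩)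
      set C1 : ℝ := 1 + ∑ x ∈ T, |C1f x| with hC1def
      set C2 : ℝ := 1 + ∑ x ∈ T, |C2f x| with hC2def
      have habs : ∀ (f : X → ℝ), ∀ x ∈ T, f x ≤ 1 + ∑ y ∈ T, |f y| := by
        intro f x hx
        have h1 : |f x| ≤ ∑ y ∈ T, |f y| :=
          Finset.single_le_sum (f := fun y => |f y|) (fun _ _ => abs_nonneg _) hx
        have h2 := le_abs_self (f x)
        linarith
      have hsumnn : ∀ (f : X → ℝ), (1:ℝ) ≤ 1 + ∑ y ∈ T, |f y| := by
        intro f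
        have : (0:ℝ) ≤ ∑ y ∈ T, |f y| := Finset.sum_nonneg fun _ _ => abs_nonneg _
        linarith
      have hC1one : (1:ℝ) ≤ C1 := hsumnn C1f
      have hC2one : (1:ℝ) ≤ C2 := hsumnn C2f
      -- uniform enlargement near A
      have henl : ∀ p q : X, L.chron p q → (L.J p q ∩ A).Nonempty →
          Bornology.IsBounded (L.J p q) → Metric.diam (L.J p q) < δleb →
          ∃ p' q', IsEnlargement L C1 C2 p q p' q' := by
        intro p q hpq hne hbd hd
        obtain ⟨z, hzJ, hzA⟩ := hne
        obtain ⟨i, hball⟩ := hleb z hzA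
        have hJU : L.J p q ⊆ U i := fun y hy => interior_subset (hball (by
          rw [Metric.mem_ball]
          exact lt_of_le_of_lt (Metric.dist_le_diam_of_mem hbd hy hzJ) hd))
        obtain ⟨p', q', h1, h2, h3⟩ := hCE i p q hpq hJU
        refine ⟨p', q', h1, ?_, ?_⟩
        · exact h2.trans (mul_le_mul_of_nonneg_right (habs C1f i i.2) Metric.diam_nonneg)
        · exact h3.trans (mul_le_mul_left
            (ENNReal.ofReal_le_ofReal (habs C2f i i.2)) _)
      set K2 : ℝ≥0∞ := (ENNReal.ofReal C2) ^ s with hK2def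
      have hK2ne : K2 ≠ ⊤ := ENNReal.rpow_ne_top_of_nonneg hs ENNReal.ofReal_ne_top
      -- main covering estimate
      have main : ∀ δ₀ : ℝ, 0 < δ₀ → L.Vd s δ₀ N ≤ μ N / ε' := by
        intro δ₀ hδ₀
        apply ENNReal.le_of_forall_pos_le_add
        intro η hη _
        set η' : ℝ≥0∞ := (η : ℝ≥0∞) / 2 with hη'def
        have hη'ne0 : η' ≠ 0 := by
          simp only [hη'def]
          simp [hη.ne']
        have hη'netop : η' ≠ ⊤ := by
          simp only [hη'def]
          exact (ENNReal.div_lt_top ENNReal.coe_ne_top (by norm_num)).ne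
        obtain ⟨U₁, hNU₁, hU₁open, hμU₁⟩ := Set.exists_isOpen_lt_of_lt N (μ N + η')
          (ENNReal.lt_add_right hμN_ne hη'ne0)
        set δsc : ℝ := min δleb (δ₀ / (C1 + 1)) with hδscdef
        have hδscpos : 0 < δsc := lt_min hδleb (div_pos hδ₀ (by linarith))
        -- family of "bad" diamonds
        set t : Set (X × X) := {pq | L.causal pq.1 pq.2 ∧ pq.1 ≠ pq.2 ∧
          (L.J pq.1 pq.2 ∩ N).Nonempty ∧ L.J pq.1 pq.2 ⊆ U₁ ∧
          Metric.diam (L.J pq.1 pq.2) < δsc ∧ Bornology.IsBounded (L.J pq.1 pq.2) ∧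
          ε' * L.rho s pq.1 pq.2 < μ (E ∩ L.J pq.1 pq.2)} with htdef
        have hchron : ∀ pq ∈ t, L.chron pq.1 pq.2 := by
          rintro pq ⟨hc, _, _, _, _, _, hbad⟩
          by_contra hnc
          have h0 : μ (E ∩ L.J pq.1 pq.2) ≤ μ (L.J pq.1 pq.2) :=
            measure_mono Set.inter_subset_right
          have h0' : μ (L.J pq.1 pq.2) = 0 := by
            rw [hμ]; exact hnull _ _ ⟨hc, hnc⟩
          rw [h0'] at h0
          exact absurd (lt_of_lt_of_le hbad h0) (by simp)
        have hrhofin : ∀ pq ∈ t, L.rho s pq.1 pq.2 ≠ ⊤ := by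
          rintro pq ⟨_, _, _, _, _, _, hbad⟩
          intro htop
          rw [htop, ENNReal.mul_top hε'ne0] at hbad
          exact absurd hbad (by simp)
        have htaufin : ∀ pq ∈ t, L.tau pq.1 pq.2 ≠ ⊤ := by
          intro pq hpq
          intro htop
          apply hrhofin pq hpq
          rw [PLS.rho, htop, ENNReal.top_rpow_of_pos hs0, ENNReal.mul_top homega_pos.ne']
        -- Vitali subfamily
        obtain ⟨u, hut, hdisj, hVit⟩ := Vitali.exists_disjoint_subfamily_covering_enlargement
          (fun pq : X × X => L.J pq.1 pq.2) t (fun pq => Metric.diam (L.J pq.1 pq.2)) 2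
          one_lt_two (fun a _ => Metric.diam_nonneg) δsc
          (fun a ha => ha.2.2.2.2.1.le)
          (fun a ha => ha.2.2.1.mono Set.inter_subset_left)
        -- choose enlargements for members of u
        have henl' : ∀ b : ↥u, ∃ p' q', IsEnlargement L C1 C2 (b:X×X).1 (b:X×X).2 p' q' := by
          intro b
          obtain ⟨hc, hne, hNne, hsub, hdm, hbd, hbad⟩ := hut b.2
          obtain ⟨z, hzJ, hzN⟩ := hNne
          exact henl _ _ (hchron _ (hut b.2)) ⟨z, hzJ, hEA (hNE hzN)⟩ hbd
            (hdm.trans_le (min_le_left _ _))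
        choose p' q' hEnl using henl'
        -- basic facts about each b ∈ u
        have hbu_basic : ∀ b : ↥u, L.causal (p' b) (q' b) ∧ p' b ≠ q' b ∧
            L.rho s (p' b) (q' b) ≤ K2 * L.rho s (b:X×X).1 (b:X×X).2 := by
          intro b
          obtain ⟨hc, hne, hNne, hsub, hdm, hbd, hbad⟩ := hut b.2
          obtain ⟨hcl, hdiam', htau'⟩ := hEnl b
          have hself : L.J (b:X×X).1 (b:X×X).2 ⊆ L.J (p' b) (q' b) := by
            apply hcl (b:X×X).1 (b:X×X).2 hc hne
            · exact ⟨(b:X×X).1, ⟨L.causal_refl _, hc⟩, ⟨L.causal_refl _, hc⟩⟩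
            · nlinarith [Metric.diam_nonneg (s := L.J (b:X×X).1 (b:X×X).2)]
          have hb1 : (b:X×X).1 ∈ L.J (p' b) (q' b) := hself ⟨L.causal_refl _, hc⟩
          have hb2 : (b:X×X).2 ∈ L.J (p' b) (q' b) := hself ⟨hc, L.causal_refl _⟩
          have htaulow : L.tau (b:X×X).1 (b:X×X).2 ≤ L.tau (p' b) (q' b) := by
            have h1 : L.tau (b:X×X).1 (b:X×X).2 + L.tau (b:X×X).2 (q' b)
                ≤ L.tau (b:X×X).1 (q' b) := L.tau_revTriangle hc hb2.2
            have h2 : L.tau (p' b) (b:X×X).1 + L.tau (b:X×X).1 (q' b)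
                ≤ L.tau (p' b) (q' b) :=
              L.tau_revTriangle hb1.1 (L.causal_trans hc hb2.2)
            calc L.tau (b:X×X).1 (b:X×X).2 ≤ L.tau (b:X×X).1 (q' b) :=
                le_trans le_self_add h1
              _ ≤ L.tau (p' b) (q' b) := le_trans le_add_self h2
          have htaupos : 0 < L.tau (p' b) (q' b) :=
            lt_of_lt_of_le (L.tau_pos_iff.mpr (hchron _ (hut b.2))) htaulow
          have htaufin' : L.tau (p' b) (q' b) ≠ ⊤ := by
            intro h
            have hfin : ENNReal.ofReal C2 * L.tau (b:X×X).1 (b:X×X).2 ≠ ⊤ :=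
              ENNReal.mul_ne_top ENNReal.ofReal_ne_top (htaufin _ (hut b.2))
            exact hfin (top_le_iff.mp (h ▸ htau'))
          have hchron' : L.chron (p' b) (q' b) := L.tau_pos_iff.mp htaupos
          refine ⟨L.chron_imp_causal hchron', ?_, ?_⟩
          · intro heq
            rcases aux_tau_self L (q' b) with h0 | h0
            · rw [heq] at htaupos; rw [h0] at htaupos; exact lt_irrefl _ htaupos
            · rw [heq] at htaufin'; exact htaufin' h0
          · rw [PLS.rho, PLS.rho]
            calc omegaL s * L.tau (p' b) (q' b) ^ s
                ≤ omegaL s * (ENNReal.ofReal C2 * L.tau (b:X×X).1 (b:X×X).2) ^ s := by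
                  gcongr
              _ = K2 * (omegaL s * L.tau (b:X×X).1 (b:X×X).2 ^ s) := by
                  rw [ENNReal.mul_rpow_of_nonneg _ _ hs, hK2def]
                  ring
        -- u is countable
        have hpos : ∀ b : ↥u, 0 < (μ.restrict E) (L.J (b:X×X).1 (b:X×X).2) := by
          intro b
          obtain ⟨_, _, _, _, _, _, hbad⟩ := hut b.2
          rw [Measure.restrict_apply (hclosed _ _).measurableSet, Set.inter_comm]
          exact lt_of_le_of_lt (zero_le) hbad
        have hucnt : Countable ↥u := by
          have hmeas : (μ.restrict E) (⋃ b : ↥u, L.J (b:X×X).1 (b:X×X).2) ≠ ⊤ := by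
            refine ne_top_of_le_ne_top ?_ (measure_mono (Set.subset_univ _))
            rw [Measure.restrict_apply_univ]
            exact hμE
          have hcnt := MeasureTheory.Measure.countable_meas_pos_of_disjoint_of_meas_iUnion_ne_top
            (μ.restrict E) (As := fun b : ↥u => L.J (b:X×X).1 (b:X×X).2)
            (fun b => (hclosed _ _).measurableSet)
            (fun b c hbc => hdisj b.2 c.2 (fun h => hbc (Subtype.ext h)))
            hmeas
          have : (Set.univ : Set ↥u).Countable := hcnt.mono (fun b _ => hpos b)
          exact Set.countable_univ_iff.mp this
        -- sums
        set f : ↥u → ℝ≥0∞ := fun b => L.rho s (b:X×X).1 (b:X×X).2 with hfdef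
        set f' : ↥u → ℝ≥0∞ := fun b => L.rho s (p' b) (q' b) with hf'def
        have hSν : ∑' b : ↥u, (μ.restrict E) (L.J (b:X×X).1 (b:X×X).2) ≤ μ N + η' := by
          rw [ENNReal.tsum_eq_iSup_sum]
          refine iSup_le fun S => ?_
          have heq : ∑ b ∈ S, (μ.restrict E) (L.J (b:X×X).1 (b:X×X).2)
              = (μ.restrict E) (⋃ b ∈ S, L.J (b:X×X).1 (b:X×X).2) := by
            rw [measure_biUnion_finset ?_ (fun b _ => (hclosed _ _).measurableSet)]
            intro b _ c _ hbc
            exact hdisj b.2 c.2 (fun h => hbc (Subtype.ext h))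
          rw [heq]
          calc (μ.restrict E) (⋃ b ∈ S, L.J (b:X×X).1 (b:X×X).2)
              ≤ (μ.restrict E) U₁ := by
                apply measure_mono
                exact Set.iUnion₂_subset fun b _ => (hut b.2).2.2.2.1
            _ ≤ μ U₁ := by
                rw [Measure.restrict_apply hU₁open.measurableSet]
                exact measure_mono Set.inter_subset_left
            _ ≤ μ N + η' := hμU₁.le
        have hS1 : ε' * ∑' b : ↥u, f b ≤ μ N + η' := by
          rw [← ENNReal.tsum_mul_left]
          refine le_trans (ENNReal.tsum_le_tsum fun b => ?_) hSν
          obtain ⟨_, _, _, _, _, _, hbad⟩ := hut b.2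
          rw [Measure.restrict_apply (hclosed _ _).measurableSet, Set.inter_comm]
          exact hbad.le
        have hS1le : ∑' b : ↥u, f b ≤ (μ N + η') / ε' := by
          rw [ENNReal.le_div_iff_mul_le (Or.inl hε'ne0) (Or.inl hε'netop), mul_comm]
          exact hS1
        have hS1ne : ∑' b : ↥u, f b ≠ ⊤ := by
          refine ne_top_of_le_ne_top ?_ hS1le
          exact (ENNReal.div_lt_top (ENNReal.add_ne_top.2 ⟨hμN_ne, hη'netop⟩) hε'ne0).ne
        have hS2le : ∑' b : ↥u, f' b ≤ K2 * ∑' b : ↥u, f b := by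
          rw [← ENNReal.tsum_mul_left]
          exact ENNReal.tsum_le_tsum fun b => (hbu_basic b).2.2
        have hS2ne : ∑' b : ↥u, f' b ≠ ⊤ :=
          ne_top_of_le_ne_top (ENNReal.mul_ne_top hK2ne hS1ne) hS2le
        -- tail estimate
        obtain ⟨F, hF⟩ : ∃ F : Finset ↥u, ∑' b : {x : ↥u // x ∉ F}, f' b ≤ η' := by
          have htd := ENNReal.tendsto_tsum_compl_atTop_zero (f := f') hS2ne
          have hpos' : (0:ℝ≥0∞) < η' := lt_of_le_of_ne (zero_le) (Ne.symm hη'ne0)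
          obtain ⟨F, hF⟩ := (htd.eventually_lt_const hpos').exists
          exact ⟨F, hF.le⟩
        -- the covering family
        set G : ↥u → X × X := fun b => if b ∈ F then (b : X × X) else (p' b, q' b) with hGdef
        have hGmem : ∀ b : ↥u, L.causal (G b).1 (G b).2 ∧ (G b).1 ≠ (G b).2 := by
          intro b
          by_cases hb : b ∈ F
          · simp only [hGdef, if_pos hb]
            exact ⟨(hut b.2).1, (hut b.2).2.1⟩
          · simp only [hGdef, if_neg hb]
            exact ⟨(hbu_basic b).1, (hbu_basic b).2.1⟩
        have hδscle : δsc ≤ δ₀ / (C1 + 1) := min_le_right _ _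
        have hC1pos : (0:ℝ) < C1 := lt_of_lt_of_le one_pos hC1one
        have hdivlt : C1 * (δ₀ / (C1 + 1)) < δ₀ := by
          rw [mul_div_assoc', div_lt_iff₀ (by linarith)]
          nlinarith
        have hGdiam : ∀ b : ↥u, Metric.diam (L.J (G b).1 (G b).2) < δ₀ := by
          intro b
          obtain ⟨_, _, _, _, hdm, _, _⟩ := hut b.2
          by_cases hb : b ∈ F
          · simp only [hGdef, if_pos hb]
            calc Metric.diam (L.J (b:X×X).1 (b:X×X).2) < δsc := hdm
              _ ≤ δ₀ / (C1 + 1) := hδscle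
              _ < δ₀ := div_lt_self hδ₀ (by linarith)
          · simp only [hGdef, if_neg hb]
            calc Metric.diam (L.J (p' b) (q' b))
                ≤ C1 * Metric.diam (L.J (b:X×X).1 (b:X×X).2) := (hEnl b).2.1
              _ ≤ C1 * (δ₀ / (C1 + 1)) := by
                  apply mul_le_mul_of_nonneg_left (le_trans hdm.le hδscle) hC1pos.le
              _ < δ₀ := hdivlt
        have hGcov : N ⊆ ⋃ b : ↥u, L.J (G b).1 (G b).2 := by
          intro x hx
          set W : Set X := ⋃ b ∈ F, L.J (b:X×X).1 (b:X×X).2 with hWdef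
          have hWclosed : IsClosed W :=
            Set.Finite.isClosed_biUnion F.finite_toSet (fun b _ => hclosed _ _)
          by_cases hxW : x ∈ W
          · obtain ⟨b, hbF, hxb⟩ := Set.mem_iUnion₂.1 hxW
            refine Set.mem_iUnion.2 ⟨b, ?_⟩
            simp only [hGdef, if_pos hbF]
            exact hxb
          · have hxU : x ∈ U₁ := hNU₁ hx
            obtain ⟨r1, hr1, hball1⟩ := Metric.isOpen_iff.mp hU₁open x hxU
            obtain ⟨r2, hr2, hball2⟩ := Metric.isOpen_iff.mp hWclosed.isOpen_compl x hxW
            set m : ℝ := min (min r1 r2) δsc with hmdef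
            have hmpos : 0 < m := lt_min (lt_min hr1 hr2) hδscpos
            obtain ⟨p, q, hc, hne, hxm, hsubm, hbad⟩ := hx.2 (m/3) (by positivity)
            have hsub1 : L.J p q ⊆ Metric.ball x m :=
              hsubm.trans (Metric.ball_subset_ball (by linarith))
            have hpqt : (p, q) ∈ t := by
              refine ⟨hc, hne, ⟨x, hxm, hx⟩, ?_, ?_, ?_, hbad⟩
              · exact hsub1.trans ((Metric.ball_subset_ball
                  (le_trans (min_le_left _ _) (min_le_left _ _))).trans hball1)
              · calc Metric.diam (L.J p q) ≤ Metric.diam (Metric.ball x (m/3)) :=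
                    Metric.diam_mono hsubm Metric.isBounded_ball
                  _ ≤ 2 * (m/3) := Metric.diam_ball (by positivity)
                  _ < δsc := by
                      have := min_le_right (min r1 r2) δsc
                      linarith
              · exact Metric.isBounded_ball.subset hsubm
            obtain ⟨b, hbu, hmeet, hdle⟩ := hVit (p, q) hpqt
            have hbF : (⟨b, hbu⟩ : ↥u) ∉ F := by
              intro hbF
              obtain ⟨y, hy1, hy2⟩ := hmeet
              have hyW : y ∈ W := Set.mem_iUnion₂.2 ⟨⟨b, hbu⟩, hbF, hy2⟩
              have hyC : y ∈ Wᶜ := hball2 (hsub1.trans (Metric.ball_subset_ball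
                (le_trans (min_le_left _ _) (min_le_right _ _))) hy1)
              exact hyC hyW
            have hsubenl : L.J p q ⊆ L.J (p' ⟨b, hbu⟩) (q' ⟨b, hbu⟩) :=
              (hEnl ⟨b, hbu⟩).1 p q hc hne hmeet hdle
            refine Set.mem_iUnion.2 ⟨⟨b, hbu⟩, ?_⟩
            simp only [hGdef, if_neg hbF]
            exact hsubenl hxm
        -- final sum estimate
        have hVdle : L.Vd s δ₀ N ≤ ∑' b : ↥u, L.rho s (G b).1 (G b).2 :=
          aux_Vd_le L s δ₀ hδ₀ N G hGmem hGdiam hGcov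
        have hsplit : ∑' b : ↥u, L.rho s (G b).1 (G b).2
            ≤ ∑ b ∈ F, f b + ∑' b : {x : ↥u // x ∉ F}, f' b := by
          refine le_trans (aux_tsum_le_sum_add_tsum_compl _ F) ?_
          gcongr with b hb b
          · exact le_of_eq (by simp only [hGdef, if_pos hb, hfdef])
          · exact le_of_eq (by simp only [hGdef, if_neg b.2, hf'def])
        calc L.Vd s δ₀ N ≤ ∑ b ∈ F, f b + ∑' b : {x : ↥u // x ∉ F}, f' b :=
              hVdle.trans hsplit
          _ ≤ (μ N + η') / ε' + η' := by
              gcongr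
              exact le_trans (ENNReal.sum_le_tsum F) hS1le
          _ ≤ μ N / ε' + η := by
              rw [ENNReal.add_div]
              have h1 : η' / ε' ≤ η' := by
                calc η' / ε' = η' * ε'⁻¹ := rfl
                  _ ≤ η' * 1 := by
                      exact mul_le_mul_right (ENNReal.inv_le_one.mpr hε'one.le) _
                  _ = η' := mul_one _
              calc μ N / ε' + η' / ε' + η' ≤ μ N / ε' + η' + η' := by gcongr
                _ = μ N / ε' + (η' + η') := by ring
                _ = μ N / ε' + η := by rw [hη'def, ENNReal.add_halves]
      -- conclude μ N = 0
      have hle : μ N ≤ μ N / ε' := by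
        conv_lhs => rw [hμ N, PLS.V]
        exact iSup₂_le fun δ hδ => main δ hδ
      rcases eq_or_ne (μ N) 0 with h | h
      · exact h
      · exfalso
        have h2 : μ N / ε' < μ N := by
          rw [ENNReal.div_lt_iff (Or.inl hε'ne0) (Or.inl hε'netop)]
          calc μ N = μ N * 1 := (mul_one _).symm
            _ < μ N * ε' := (ENNReal.mul_lt_mul_iff_right h hμN_ne).2 hε'one
        exact absurd hle (not_le.mpr h2)
  refine ⟨N, hNE, key, ?_⟩
  rintro x ⟨hxE, hxN⟩
  have hx' : ¬ ∀ δ > (0:ℝ), ∃ p q : X, L.causal p q ∧ p ≠ q ∧ x ∈ L.J p q ∧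
      L.J p q ⊆ Metric.ball x δ ∧ ε' * L.rho s p q < μ (E ∩ L.J p q) :=
    fun h => hxN ⟨hxE, h⟩
  push_neg at hx'
  obtain ⟨δx, hδx, hall⟩ := hx'
  exact ⟨δx, hδx, fun p q h1 h2 h3 h4 => hall p q h1 h2 h3 h4⟩
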